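/- arXiv:1005.1197 — 2 statements merged into one kernel-verified Lean document; each statement's English description precedes it below -/
import Mathlib

section
/- Let 𝒮 be a linear space of functions analytic on ℂ⁺ closed under the difference-quotient operators D_w S(z) = (S(z) − S(w))/(z − w) for every w ∈ ℂ⁺. If 𝒮 is finite-dimensional, then every element of 𝒮 is a rational function. -/
open Polynomial

/-- A finite-dimensional linear space of functions analytic on `ℂ⁺` closed under all
difference-quotient operators `D_w S(z) = (S(z) − S(w))/(z − w)`, `w ∈ ℂ⁺`, consists of
rational functions. -/
theorem stmt16 (S : Submodule ℂ (ℂ → ℂ))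
    (han : ∀ f ∈ S, DifferentiableOn ℂ f {z : ℂ | 0 < z.im})
    (hdq : ∀ f ∈ S, ∀ w : ℂ, 0 < w.im → ∃ g ∈ S,
      ∀ z : ℂ, 0 < z.im → z ≠ w → g z = (f z - f w) / (z - w))
    (hfd : FiniteDimensional ℂ S) :
    ∀ f ∈ S, ∃ P Q : Polynomial ℂ, Q ≠ 0 ∧
      ∀ z : ℂ, 0 < z.im → Q.eval z ≠ 0 → f z = P.eval z / Q.eval z := by
  intro f hf
  set w : ℂ := Complex.I with hw
  have hwim : 0 < w.im := by simp [hw]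
  have hD : ∀ x : S, ∃ y : S, ∀ z : ℂ, 0 < z.im → z ≠ w →
      (y : ℂ → ℂ) z = ((x : ℂ → ℂ) z - (x : ℂ → ℂ) w) / (z - w) := by
    intro x
    obtain ⟨g, hg, hgspec⟩ := hdq x x.2 w hwim
    exact ⟨⟨g, hg⟩, hgspec⟩
  choose D hDspec using hD
  set F : ℕ → S := fun k => D^[k] ⟨f, hf⟩ with hF
  have hFsucc : ∀ k, F (k+1) = D (F k) := fun k => Function.iterate_succ_apply' D k _
  set p : ℕ → Polynomial ℂ := fun k => ∑ j ∈ Finset.range k,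
    Polynomial.C ((F j : ℂ → ℂ) w) * (Polynomial.X - Polynomial.C w)^j with hp
  have key : ∀ k, ∀ z : ℂ, 0 < z.im → z ≠ w →
      (F k : ℂ → ℂ) z * (z - w)^k = f z - (p k).eval z := by
    intro k
    induction k with
    | zero => intro z hz hzw; simp [hF, hp]
    | succ k ih =>
      intro z hz hzw
      have hzw' : z - w ≠ 0 := sub_ne_zero.mpr hzw
      have h1 : (F (k+1) : ℂ → ℂ) z = ((F k : ℂ → ℂ) z - (F k : ℂ → ℂ) w) / (z - w) := by
        rw [hFsucc]; exact hDspec (F k) z hz hzw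
      have h2 : (F (k+1) : ℂ → ℂ) z * (z - w)^(k+1)
          = ((F k : ℂ → ℂ) z - (F k : ℂ → ℂ) w) * (z - w)^k := by
        rw [h1, pow_succ']
        field_simp
      have hpe : (p (k+1)).eval z = (p k).eval z + (F k : ℂ → ℂ) w * (z - w)^k := by
        simp [hp, Finset.sum_range_succ]
      rw [h2, sub_mul, ih z hz hzw, hpe]; ring
  set n := Module.finrank ℂ S with hn
  have hnli : ¬ LinearIndependent ℂ (fun i : Fin (n+1) => F i) := by
    intro h
    have := h.fintype_card_le_finrank
    simp [hn] at this
  obtain ⟨c, hc0, i0, hi0⟩ := Fintype.not_linearIndependent_iff.mp hnli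
  have hsum : ∀ z : ℂ, ∑ i : Fin (n+1), c i * (F i : ℂ → ℂ) z = 0 := by
    intro z
    have := congrFun (congrArg (Subtype.val) hc0) z
    simpa using this
  set Q0 : Polynomial ℂ := ∑ i : Fin (n+1),
      Polynomial.C (c i) * (Polynomial.X - Polynomial.C w)^(n - (i : ℕ)) with hQ0
  set P0 : Polynomial ℂ := ∑ i : Fin (n+1),
      Polynomial.C (c i) * p (i : ℕ) * (Polynomial.X - Polynomial.C w)^(n - (i : ℕ)) with hP0
  have hQ0ne : Q0 ≠ 0 := by
    intro h
    apply hi0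
    have h2 := congrArg (fun q => (q.comp (Polynomial.X + Polynomial.C w)).coeff (n - (i0 : ℕ))) h
    simp only [hQ0] at h2
    rw [Polynomial.sum_comp] at h2
    simp only [Polynomial.mul_comp, Polynomial.C_comp, Polynomial.pow_comp,
      Polynomial.sub_comp, Polynomial.X_comp, Polynomial.C_comp, add_sub_cancel_right,
      Polynomial.zero_comp, Polynomial.finset_sum_coeff, Polynomial.coeff_C_mul,
      Polynomial.coeff_X_pow, Polynomial.coeff_zero, mul_ite, mul_one, mul_zero] at h2
    rw [Finset.sum_eq_single i0 (fun b _ hb => if_neg (fun hnb => hb (by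
        have hb' : (b : ℕ) ≤ n := Nat.lt_succ_iff.mp b.2
        have hi' : (i0 : ℕ) ≤ n := Nat.lt_succ_iff.mp i0.2
        exact Fin.ext (by omega))))
      (fun h' => absurd (Finset.mem_univ i0) h')] at h2
    simpa using h2
  have hmain : ∀ z : ℂ, 0 < z.im → z ≠ w → f z * Q0.eval z = P0.eval z := by
    intro z hz hzw
    have h1 : ∑ i : Fin (n+1), c i * (F (i : ℕ) : ℂ → ℂ) z * (z - w)^n = 0 := by
      rw [← Finset.sum_mul, hsum z, zero_mul]
    have h2 : ∀ i : Fin (n+1), c i * (F (i : ℕ) : ℂ → ℂ) z * (z - w)^n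
        = c i * (f z - (p (i : ℕ)).eval z) * (z - w)^(n - (i : ℕ)) := by
      intro i
      have hpow : (z - w)^n = (z - w)^(i : ℕ) * (z - w)^(n - (i : ℕ)) := by
        rw [← pow_add]
        congr 1
        omega
      rw [hpow, ← key (i : ℕ) z hz hzw]
      ring
    rw [Finset.sum_congr rfl (fun i _ => h2 i)] at h1
    have hQe : Q0.eval z = ∑ i : Fin (n+1), c i * (z - w)^(n - (i : ℕ)) := by
      rw [hQ0, Polynomial.eval_finset_sum]; simp
    have hPe : P0.eval z = ∑ i : Fin (n+1), c i * (p (i : ℕ)).eval z * (z - w)^(n - (i : ℕ)) := by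
      rw [hP0, Polynomial.eval_finset_sum]; simp [mul_assoc]
    rw [hQe, hPe, Finset.mul_sum, ← sub_eq_zero, ← Finset.sum_sub_distrib]
    rw [← h1]
    apply Finset.sum_congr rfl
    intro i _
    ring
  refine ⟨(Polynomial.X - Polynomial.C w) * P0, (Polynomial.X - Polynomial.C w) * Q0,
    mul_ne_zero (Polynomial.X_sub_C_ne_zero w) hQ0ne, ?_⟩
  intro z hz hQz
  simp only [Polynomial.eval_mul, Polynomial.eval_sub, Polynomial.eval_X, Polynomial.eval_C] at hQz ⊢
  have hzw : z - w ≠ 0 := fun h => hQz (by rw [h, zero_mul])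
  have hQ0z : Q0.eval z ≠ 0 := fun h => hQz (by rw [h, mul_zero])
  have := hmain z hz (sub_ne_zero.mp hzw)
  field_simp
  linear_combination this
end

section
/- Let (t_n) ⊂ ℝ, b_n > 0, and assume polynomials are dense in ℓ²(T,b) = {f : T → ℂ : ∑|f(t_n)|² b_n < ∞} and (c_n) satisfies ∑|c_n|²/b_n < ∞ and ∑_n |c_n||t_n|^k < ∞ for every k ≥ 0. Let N be the least nonnegative integer with ∑_n c_n t_n^N ≠ 0 (which exists by density of polynomials). Then ∑_n c_n/(iy − t_n) = (∑_n c_n t_n^N)/(iy)^{N+1} + O(y^{−N−2}) as y → +∞; in particular |∑_n c_n/(iy − t_n)| ≥ c·y^{−N−1} for large y. -/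
open Complex
set_option maxHeartbeats 1000000

lemma expand18 (u τ : ℂ) (hu : u ≠ 0) (h : u - τ ≠ 0) :
    ∀ n : ℕ, 1/(u - τ) = (∑ k ∈ Finset.range n, τ^k / u^(k+1)) + τ^n/(u^n*(u-τ))
  | 0 => by simp
  | (n+1) => by
      have hun : u ^ n ≠ 0 := pow_ne_zero _ hu
      have h1 : τ^n/(u^n*(u-τ)) = τ^n/u^(n+1) + τ^(n+1)/(u^(n+1)*(u-τ)) := by
        field_simp
        ring
      rw [expand18 u τ hu h n, Finset.sum_range_succ, h1]
      ring

lemma main18 (t : ℕ → ℝ)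
    (c : ℕ → ℂ)
    (hc2 : ∀ k : ℕ, Summable (fun n => ‖c n‖ * |t n| ^ k))
    (N : ℕ)
    (hNmin : ∀ m : ℕ, m < N → ∑' n, c n * ((t n : ℂ)) ^ m = 0)
    (y : ℝ) (hy : 1 ≤ y) :
      ‖(∑' n, c n / (I * (y : ℂ) - (t n : ℂ))) -
          (∑' n, c n * ((t n : ℂ)) ^ N) / (I * (y : ℂ)) ^ (N + 1)‖ ≤
        (∑' n, ‖c n‖ * |t n| ^ (N+1)) / y ^ (N + 2) := by
  have hy0 : (0:ℝ) < y := lt_of_lt_of_le one_pos hy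
  set u : ℂ := I * (y : ℂ) with hu_def
  have hnu : ‖u‖ = y := by
    simp [hu_def, norm_mul, abs_of_pos hy0]
  have hu : u ≠ 0 := by
    intro h0
    rw [h0, norm_zero] at hnu
    exact hy0.ne hnu
  have hden : ∀ n, y ≤ ‖u - (t n : ℂ)‖ := by
    intro n
    have him : (u - (t n : ℂ)).im = y := by simp [hu_def]
    calc y = |(u - (t n : ℂ)).im| := by rw [him, abs_of_pos hy0]
    _ ≤ ‖u - (t n : ℂ)‖ := Complex.abs_im_le_norm _
  have hne : ∀ n, u - (t n : ℂ) ≠ 0 := by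
    intro n h0
    have := hden n
    rw [h0, norm_zero] at this
    exact absurd this (not_le.mpr hy0)
  -- summability facts
  have hsum_k : ∀ k : ℕ, Summable (fun n => c n * ((t n : ℂ)) ^ k) := by
    intro k
    apply Summable.of_norm
    have : (fun n => ‖c n * ((t n : ℂ)) ^ k‖) = fun n => ‖c n‖ * |t n| ^ k := by
      funext n
      simp [norm_mul, norm_pow]
    rw [this]; exact hc2 k
  have hsum_inner : ∀ k : ℕ, Summable (fun n => c n * ((t n : ℂ)) ^ k / u ^ (k+1)) :=
    fun k => (hsum_k k).div_const _
  have hrem_bound : ∀ n, ‖c n * ((t n : ℂ)) ^ (N+1) / (u^(N+1) * (u - (t n : ℂ)))‖ ≤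
      ‖c n‖ * |t n| ^ (N+1) / y ^ (N+2) := by
    intro n
    rw [norm_div, norm_mul, norm_mul, norm_pow, norm_pow, hnu]
    have h1 : ‖((t n : ℂ))‖ = |t n| := by simp
    rw [h1]
    have hnum : (0:ℝ) ≤ ‖c n‖ * |t n| ^ (N+1) := by positivity
    have hd : y ^ (N+2) ≤ y ^ (N+1) * ‖u - (t n : ℂ)‖ := by
      calc y ^ (N+2) = y ^ (N+1) * y := by ring
      _ ≤ y ^ (N+1) * ‖u - (t n : ℂ)‖ := by
          apply mul_le_mul_of_nonneg_left (hden n) (by positivity)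
    exact div_le_div_of_nonneg_left hnum (by positivity) hd
  have hrem_norm : Summable (fun n => ‖c n * ((t n : ℂ)) ^ (N+1) / (u^(N+1) * (u - (t n : ℂ)))‖) :=
    Summable.of_nonneg_of_le (fun n => norm_nonneg _) hrem_bound ((hc2 (N+1)).div_const _)
  have hrem_sum : Summable (fun n => c n * ((t n : ℂ)) ^ (N+1) / (u^(N+1) * (u - (t n : ℂ)))) :=
    Summable.of_norm hrem_norm
  -- the main identity
  have hid : ∀ n, c n / (u - (t n : ℂ)) =
      (∑ k ∈ Finset.range (N+1), c n * ((t n : ℂ))^k / u^(k+1)) +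
        c n * ((t n : ℂ))^(N+1) / (u^(N+1) * (u - (t n : ℂ))) := by
    intro n
    have h := expand18 u (t n) hu (hne n) (N+1)
    calc c n / (u - (t n : ℂ)) = c n * (1 / (u - (t n : ℂ))) := by ring
    _ = c n * ((∑ k ∈ Finset.range (N+1), ((t n : ℂ))^k / u^(k+1)) +
          ((t n : ℂ))^(N+1)/(u^(N+1)*(u - (t n : ℂ)))) := by rw [h]
    _ = _ := by
        rw [mul_add, Finset.mul_sum]
        congr 1
        · exact Finset.sum_congr rfl fun k _ => by ring
        · ring
  have hsum_finsum : Summable (fun n => ∑ k ∈ Finset.range (N+1),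
      c n * ((t n : ℂ))^k / u^(k+1)) :=
    summable_sum fun k _ => hsum_inner k
  have hsplit : (∑' n, c n / (u - (t n : ℂ))) =
      (∑ k ∈ Finset.range (N+1), (∑' n, c n * ((t n : ℂ))^k) / u^(k+1)) +
        ∑' n, c n * ((t n : ℂ))^(N+1) / (u^(N+1) * (u - (t n : ℂ))) := by
    rw [tsum_congr hid, Summable.tsum_add hsum_finsum hrem_sum]
    congr 1
    rw [Summable.tsum_finsetSum (fun k _ => hsum_inner k)]
    exact Finset.sum_congr rfl fun k _ => tsum_div_const
  have hcollapse : (∑ k ∈ Finset.range (N+1), (∑' n, c n * ((t n : ℂ))^k) / u^(k+1)) =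
      (∑' n, c n * ((t n : ℂ))^N) / u^(N+1) := by
    apply Finset.sum_eq_single_of_mem N (Finset.self_mem_range_succ N)
    intro k hk hkN
    have : k < N := lt_of_le_of_ne (Nat.lt_succ_iff.mp (Finset.mem_range.mp hk)) hkN
    rw [hNmin k this, zero_div]
  rw [hsplit, hcollapse]
  rw [add_sub_cancel_left]
  calc ‖∑' n, c n * ((t n : ℂ))^(N+1) / (u^(N+1) * (u - (t n : ℂ)))‖
      ≤ ∑' n, ‖c n * ((t n : ℂ))^(N+1) / (u^(N+1) * (u - (t n : ℂ)))‖ :=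
        norm_tsum_le_tsum_norm hrem_norm
    _ ≤ ∑' n, ‖c n‖ * |t n| ^ (N+1) / y ^ (N+2) := by
        apply Summable.tsum_le_tsum hrem_bound
        · exact hrem_norm
        · exact (hc2 (N+1)).div_const _
    _ = (∑' n, ‖c n‖ * |t n| ^ (N+1)) / y ^ (N+2) := tsum_div_const



/-- From the proof of Theorem 1.4: if polynomials are dense in `ℓ²(T,b)`,
`∑ |cₙ|²/bₙ < ∞`, `∑ |cₙ||tₙ|^k < ∞` for every `k`, and `N` is the least nonnegative
integer with `∑ cₙ tₙ^N ≠ 0`, then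
`∑ cₙ/(iy − tₙ) = (∑ cₙ tₙ^N)/(iy)^{N+1} + O(y^{−N−2})` as `y → +∞`; in particular
`|∑ cₙ/(iy − tₙ)| ≥ c₀ y^{−N−1}` for large `y`. -/
theorem stmt18 (t : ℕ → ℝ) (htinj : Function.Injective t)
    (b : ℕ → ℝ) (hb : ∀ n, 0 < b n)
    (hdense : ∀ a : ℕ → ℂ, Summable (fun n => ‖a n‖ ^ 2 * b n) →
      (∀ k : ℕ, ∑' n, a n * ((t n : ℂ)) ^ k * (b n : ℂ) = 0) → a = 0)
    (c : ℕ → ℂ) (hc1 : Summable (fun n => ‖c n‖ ^ 2 / b n))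
    (hc2 : ∀ k : ℕ, Summable (fun n => ‖c n‖ * |t n| ^ k))
    (N : ℕ) (hN : ∑' n, c n * ((t n : ℂ)) ^ N ≠ 0)
    (hNmin : ∀ m : ℕ, m < N → ∑' n, c n * ((t n : ℂ)) ^ m = 0) :
    (∃ C : ℝ, 0 < C ∧ ∃ y₀ : ℝ, ∀ y : ℝ, y₀ ≤ y →
      ‖(∑' n, c n / (I * (y : ℂ) - (t n : ℂ))) -
          (∑' n, c n * ((t n : ℂ)) ^ N) / (I * (y : ℂ)) ^ (N + 1)‖ ≤ C / y ^ (N + 2)) ∧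
    ∃ c₀ : ℝ, 0 < c₀ ∧ ∃ y₁ : ℝ, ∀ y : ℝ, y₁ ≤ y →
      c₀ / y ^ (N + 1) ≤ ‖∑' n, c n / (I * (y : ℂ) - (t n : ℂ))‖ := by
  set C : ℝ := ∑' n, ‖c n‖ * |t n| ^ (N+1) with hC_def
  have hC0 : 0 ≤ C := tsum_nonneg fun n => by positivity
  set M : ℂ := ∑' n, c n * ((t n : ℂ)) ^ N with hM_def
  have hM0 : 0 < ‖M‖ := norm_pos_iff.mpr hN
  have hmain := main18 t c hc2 N hNmin
  constructor
  · refine ⟨C + 1, by linarith, 1, fun y hy => ?_⟩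
    have hy0 : (0:ℝ) < y := lt_of_lt_of_le one_pos hy
    refine (hmain y hy).trans ?_
    gcongr
    linarith
  · refine ⟨‖M‖/2, by positivity, max 1 (2*(C+1)/‖M‖), fun y hy => ?_⟩
    have hy1 : (1:ℝ) ≤ y := le_trans (le_max_left _ _) hy
    have hy0 : (0:ℝ) < y := lt_of_lt_of_le one_pos hy1
    have hy2 : 2*(C+1)/‖M‖ ≤ y := le_trans (le_max_right _ _) hy
    have hest := hmain y hy1
    have hnu : ‖(I * (y:ℂ))‖ = y := by
      simp [norm_mul, abs_of_pos hy0]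
    set S : ℂ := ∑' n, c n / (I * (y : ℂ) - (t n : ℂ)) with hS_def
    have hMnorm : ‖M / (I * (y:ℂ))^(N+1)‖ = ‖M‖ / y^(N+1) := by
      rw [norm_div, norm_pow, hnu]
    have h2 : 2*(C+1) ≤ ‖M‖ * y := by
      rw [div_le_iff₀ hM0] at hy2
      linarith [mul_comm y ‖M‖]
    have hCy : C / y ^ (N+2) ≤ (‖M‖/2) / y^(N+1) := by
      rw [div_le_div_iff₀ (by positivity) (by positivity)]
      have hCle : C ≤ ‖M‖ * y / 2 := by linarith
      have hpow : (0:ℝ) ≤ y^(N+1) := by positivity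
      calc C * y^(N+1) ≤ (‖M‖*y/2) * y^(N+1) := mul_le_mul_of_nonneg_right hCle hpow
      _ = ‖M‖/2 * y^(N+2) := by ring
    have htr : ‖M / (I*(y:ℂ))^(N+1)‖ ≤ ‖S‖ + ‖S - M / (I*(y:ℂ))^(N+1)‖ := by
      have h := norm_sub_le S (S - M / (I*(y:ℂ))^(N+1))
      rwa [sub_sub_cancel] at h
    have hhalf : ‖M‖/y^(N+1) = (‖M‖/2)/y^(N+1) + (‖M‖/2)/y^(N+1) := by ring
    rw [hMnorm, hhalf] at htr
    linarith
end
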